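/- arXiv:2110.02505 — 5 statements merged into one kernel-verified Lean document; each statement's English description precedes it below -/
import Mathlib

section
/- For a bounded linear operator A on a complex Hilbert space, (1/4)‖A*A + AA*‖ ≤ w(A)² ≤ (1/2)‖A*A + AA*‖. -/
open ContinuousLinearMap in
noncomputable def numRad {E : Type*} [NormedAddCommGroup E] [InnerProductSpace ℂ E]
    (T : E →L[ℂ] E) : ℝ :=
  ⨆ x : {x : E // ‖x‖ = 1}, ‖(inner ℂ (T x) (x : E) : ℂ)‖

variable {H : Type*} [NormedAddCommGroup H] [InnerProductSpace ℂ H] [CompleteSpace H]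

/-- `|A| = (A*A)^{1/2}`, the positive square root of `A*A`. -/
noncomputable def absOp (A : H →L[ℂ] H) : H →L[ℂ] H :=
  CFC.sqrt (ContinuousLinearMap.adjoint A * A)

/-- real part of an operator -/
noncomputable def reOp (A : H →L[ℂ] H) : H →L[ℂ] H :=
  (1 / 2 : ℂ) • (A + ContinuousLinearMap.adjoint A)

/-- imaginary part of an operator -/
noncomputable def imOp (A : H →L[ℂ] H) : H →L[ℂ] H :=
  (1 / (2 * Complex.I) : ℂ) • (A - ContinuousLinearMap.adjoint A)

/-- the block diagonal operator `diag(A,B)` on `H ⊕ H` (ℓ²-sum). -/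
noncomputable def blockDiag (A B : H →L[ℂ] H) :
    WithLp 2 (H × H) →L[ℂ] WithLp 2 (H × H) :=
  ((WithLp.prodContinuousLinearEquiv 2 ℂ H H).symm.toContinuousLinearMap).comp
    ((A.prodMap B).comp (WithLp.prodContinuousLinearEquiv 2 ℂ H H).toContinuousLinearMap)

/-- the off-diagonal block operator `[[O,A],[B,O]] : (x,y) ↦ (A y, B x)` on `H ⊕ H`. -/
noncomputable def blockOffDiag (A B : H →L[ℂ] H) :
    WithLp 2 (H × H) →L[ℂ] WithLp 2 (H × H) :=
  ((WithLp.prodContinuousLinearEquiv 2 ℂ H H).symm.toContinuousLinearMap).comp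
    (((A.prodMap B).comp (ContinuousLinearEquiv.prodComm ℂ H H).toContinuousLinearMap).comp
      (WithLp.prodContinuousLinearEquiv 2 ℂ H H).toContinuousLinearMap)

set_option linter.unusedSectionVars false


open ComplexConjugate



-- algebra identity
lemma alg_id {R : Type*} [Ring R] [Algebra ℂ R] (a b : R) :
    ((1/2 : ℂ) • (a + b)) * ((1/2 : ℂ) • (a + b)) +
      ((1 / (2 * Complex.I) : ℂ) • (a - b)) * ((1 / (2 * Complex.I) : ℂ) • (a - b))
      = (1/2 : ℂ) • (b * a + a * b) := by
  rw [smul_mul_smul_comm, smul_mul_smul_comm]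
  have h1 : (1/2 : ℂ) * (1/2) = 1/4 := by norm_num
  have h2 : (1/(2*Complex.I) : ℂ) * (1/(2*Complex.I)) = -(1/4) := by
    field_simp
    rw [Complex.I_sq]
    norm_num
  rw [h1, h2]
  have e1 : (a + b) * (a + b) = a*a + a*b + b*a + b*b := by noncomm_ring
  have e2 : (a - b) * (a - b) = a*a - a*b - b*a + b*b := by noncomm_ring
  rw [e1, e2]
  module

local notation "⟪" x ", " y "⟫" => @inner ℂ _ _ x y

lemma sa_norm_le (B : H →L[ℂ] H) (hB : IsSelfAdjoint B) {M : ℝ} (hM : 0 ≤ M)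
    (h : ∀ u : H, ‖⟪B u, u⟫‖ ≤ M * ‖u‖ ^ 2) : ‖B‖ ≤ M := by
  apply ContinuousLinearMap.opNorm_le_bound _ hM
  intro x
  rcases eq_or_ne (B x) 0 with hx | hx
  · simp [hx]; positivity
  rcases eq_or_ne x 0 with rfl | hx0
  · simp
  have hBx : (0:ℝ) < ‖B x‖ := norm_pos_iff.mpr hx
  have hx0' : (0:ℝ) < ‖x‖ := norm_pos_iff.mpr hx0
  set y : H := ((‖x‖ / ‖B x‖ : ℝ) : ℂ) • B x with hy
  have hny : ‖y‖ = ‖x‖ := by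
    rw [hy, norm_smul]
    simp [abs_div, abs_of_nonneg (norm_nonneg x), abs_of_nonneg hBx.le,
      div_mul_cancel₀ _ hBx.ne']
  have hsym := hB.isSymmetric
  have hconj : ⟪B y, x⟫ = conj ⟪B x, y⟫ := (hsym y x).trans (inner_conj_symm y (B x)).symm
  have hval : ⟪B x, y⟫ = ((‖x‖ * ‖B x‖ : ℝ) : ℂ) := by
    have hc : (‖B x‖ : ℂ) ≠ 0 := Complex.ofReal_ne_zero.mpr hBx.ne'
    rw [hy, inner_smul_right, inner_self_eq_norm_sq_to_K]
    push_cast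
    field_simp
    rfl
  have key : ⟪B (x+y), x+y⟫ - ⟪B (x-y), x-y⟫ = ((4 * (‖x‖ * ‖B x‖) : ℝ) : ℂ) := by
    have e : ⟪B (x+y), x+y⟫ - ⟪B (x-y), x-y⟫ = 2 * (⟪B x, y⟫ + ⟪B y, x⟫) := by
      simp only [map_add, map_sub, inner_add_left, inner_add_right, inner_sub_left,
        inner_sub_right]
      ring
    rw [e, hconj, hval]
    rw [Complex.add_conj]
    push_cast
    simp
    ring
  have hnorm : (4 : ℝ) * (‖x‖ * ‖B x‖) ≤ M * ‖x+y‖^2 + M * ‖x-y‖^2 := by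
    calc (4:ℝ) * (‖x‖ * ‖B x‖) = ‖((4 * (‖x‖ * ‖B x‖) : ℝ) : ℂ)‖ := by
          rw [Complex.norm_real, Real.norm_eq_abs, abs_of_nonneg (by positivity)]
      _ = ‖⟪B (x+y), x+y⟫ - ⟪B (x-y), x-y⟫‖ := by rw [key]
      _ ≤ ‖⟪B (x+y), x+y⟫‖ + ‖⟪B (x-y), x-y⟫‖ := norm_sub_le _ _
      _ ≤ M * ‖x+y‖^2 + M * ‖x-y‖^2 := add_le_add (h _) (h _)
  have hpar : ‖x+y‖^2 + ‖x-y‖^2 = 2 * (‖x‖^2 + ‖y‖^2) := by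
    have := parallelogram_law_with_norm ℂ x y
    nlinarith [this]
  have : (4:ℝ) * (‖x‖ * ‖B x‖) ≤ 4 * (M * ‖x‖^2) := by
    have h2 : M * ‖x+y‖^2 + M * ‖x-y‖^2 = M * (‖x+y‖^2 + ‖x-y‖^2) := by ring
    rw [h2, hpar, hny] at hnorm
    nlinarith [hnorm]
  nlinarith [this, hx0']


lemma numRad_bdd (A : H →L[ℂ] H) :
    BddAbove (Set.range fun x : {x : H // ‖x‖ = 1} => ‖⟪A x, (x : H)⟫‖) := by
  refine ⟨‖A‖, ?_⟩
  rintro _ ⟨⟨x, hx⟩, rfl⟩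
  calc ‖⟪A x, x⟫‖ ≤ ‖A x‖ * ‖x‖ := norm_inner_le_norm _ _
    _ ≤ ‖A‖ * ‖x‖ * ‖x‖ := by gcongr; exact A.le_opNorm x
    _ = ‖A‖ := by rw [hx]; ring

lemma numRad_nonneg (A : H →L[ℂ] H) : 0 ≤ numRad A := by
  rcases isEmpty_or_nonempty {x : H // ‖x‖ = 1} with he | hne
  · simp [numRad, Real.iSup_of_isEmpty]
  · exact le_ciSup_of_le (numRad_bdd A) (Classical.arbitrary _) (norm_nonneg _)

lemma inner_le_numRad (A : H →L[ℂ] H) (x : H) :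
    ‖⟪A x, x⟫‖ ≤ numRad A * ‖x‖ ^ 2 := by
  rcases eq_or_ne x 0 with rfl | hx
  · simp
  have hx' : (0:ℝ) < ‖x‖ := norm_pos_iff.mpr hx
  set u : H := ((‖x‖⁻¹ : ℝ) : ℂ) • x with hu
  have hun : ‖u‖ = 1 := by
    rw [hu, norm_smul]
    simp [abs_of_nonneg (inv_nonneg.mpr hx'.le), inv_mul_cancel₀ hx'.ne']
  have hinner : ⟪A u, u⟫ = ((‖x‖⁻¹ ^ 2 : ℝ) : ℂ) * ⟪A x, x⟫ := by
    rw [hu]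
    simp only [map_smul, inner_smul_left, inner_smul_right, Complex.conj_ofReal, smul_smul]
    push_cast
    ring
  have h1 : ‖⟪A u, u⟫‖ ≤ numRad A := le_ciSup (numRad_bdd A) (⟨u, hun⟩ : {x : H // ‖x‖ = 1})
  have h2 : ‖⟪A u, u⟫‖ = ‖x‖⁻¹ ^ 2 * ‖⟪A x, x⟫‖ := by
    rw [hinner, norm_mul, Complex.norm_real, Real.norm_eq_abs, abs_of_nonneg (by positivity)]
  rw [h2] at h1
  calc ‖⟪A x, x⟫‖ = (‖x‖⁻¹ ^ 2 * ‖⟪A x, x⟫‖) * ‖x‖ ^ 2 := by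
        field_simp
    _ ≤ numRad A * ‖x‖ ^ 2 := by gcongr

lemma reOp_sa (A : H →L[ℂ] H) : IsSelfAdjoint (reOp A) := by
  have c2 : conj (1/2 : ℂ) = 1/2 := by
    rw [map_div₀, map_one, Complex.conj_ofNat]
  show star _ = _
  rw [reOp, star_smul, star_add, ContinuousLinearMap.star_eq_adjoint,
    ContinuousLinearMap.star_eq_adjoint, ContinuousLinearMap.adjoint_adjoint,
    RCLike.star_def, c2, add_comm]

lemma imOp_sa (A : H →L[ℂ] H) : IsSelfAdjoint (imOp A) := by
  have c2 : conj (1/(2 * Complex.I) : ℂ) = -(1/(2 * Complex.I)) := by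
    rw [map_div₀, map_one, map_mul, Complex.conj_I, Complex.conj_ofNat]
    ring
  show star _ = _
  rw [imOp, star_smul, star_sub, ContinuousLinearMap.star_eq_adjoint,
    ContinuousLinearMap.star_eq_adjoint, ContinuousLinearMap.adjoint_adjoint,
    RCLike.star_def, c2, neg_smul, ← smul_neg, neg_sub]

lemma inner_reOp (A : H →L[ℂ] H) (x : H) :
    ⟪reOp A x, x⟫ = ((⟪A x, x⟫.re : ℝ) : ℂ) := by
  have h1 : ⟪ContinuousLinearMap.adjoint A x, x⟫ = conj ⟪A x, x⟫ := by
    rw [ContinuousLinearMap.adjoint_inner_left]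
    exact (inner_conj_symm x (A x)).symm
  rw [reOp]
  simp only [ContinuousLinearMap.smul_apply, ContinuousLinearMap.add_apply,
    inner_smul_left, inner_add_left, h1, Complex.add_conj]
  have c2 : conj (1/2 : ℂ) = 1/2 := by
    rw [map_div₀, map_one, Complex.conj_ofNat]
  rw [c2]
  push_cast
  ring

lemma inner_imOp (A : H →L[ℂ] H) (x : H) :
    ⟪imOp A x, x⟫ = ((-⟪A x, x⟫.im : ℝ) : ℂ) := by
  have h1 : ⟪ContinuousLinearMap.adjoint A x, x⟫ = conj ⟪A x, x⟫ := by
    rw [ContinuousLinearMap.adjoint_inner_left]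
    exact (inner_conj_symm x (A x)).symm
  have key : ∀ z : ℂ, conj (1/(2*Complex.I)) * (z - conj z) = ((-z.im : ℝ) : ℂ) := by
    intro z
    simp [Complex.ext_iff, Complex.div_re, Complex.div_im, Complex.normSq]
    ring
  rw [imOp]
  simp only [ContinuousLinearMap.smul_apply, ContinuousLinearMap.sub_apply,
    inner_smul_left, inner_sub_left, h1]
  exact key _

theorem kittaneh_ineq (A : H →L[ℂ] H) :
    (1 / 4) * ‖ContinuousLinearMap.adjoint A * A + A * ContinuousLinearMap.adjoint A‖
      ≤ numRad A ^ 2 ∧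
    numRad A ^ 2
      ≤ (1 / 2) * ‖ContinuousLinearMap.adjoint A * A + A * ContinuousLinearMap.adjoint A‖ := by
  have hD : reOp A * reOp A + imOp A * imOp A
      = (1/2 : ℂ) • (ContinuousLinearMap.adjoint A * A + A * ContinuousLinearMap.adjoint A) := by
    rw [reOp, imOp]
    exact alg_id A _
  have hnhalf : ‖(1/2 : ℂ)‖ = 1/2 := by norm_num
  have hnD : ‖reOp A * reOp A + imOp A * imOp A‖
      = (1/2) * ‖ContinuousLinearMap.adjoint A * A + A * ContinuousLinearMap.adjoint A‖ := by
    rw [hD, norm_smul, hnhalf]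
  rcases isEmpty_or_nonempty {x : H // ‖x‖ = 1} with he | hne
  · have hz : ∀ x : H, x = 0 := by
      intro x
      by_contra hx
      have hx' : (0:ℝ) < ‖x‖ := norm_pos_iff.mpr hx
      exact he.elim ⟨((‖x‖⁻¹ : ℝ) : ℂ) • x, by
        rw [norm_smul]
        simp [abs_of_nonneg (inv_nonneg.mpr hx'.le), inv_mul_cancel₀ hx'.ne']⟩
    have hA : A = 0 := by ext x; rw [hz x]; simp
    have hnum : numRad A = 0 := by simp [numRad, Real.iSup_of_isEmpty]
    subst hA
    constructor <;> simp [hnum]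
  have hBle : ‖reOp A‖ ≤ numRad A := by
    apply sa_norm_le _ (reOp_sa A) (numRad_nonneg A)
    intro u
    rw [inner_reOp]
    calc ‖((⟪A u, u⟫.re : ℝ) : ℂ)‖ = |⟪A u, u⟫.re| := by
          rw [Complex.norm_real, Real.norm_eq_abs]
      _ ≤ ‖⟪A u, u⟫‖ := by exact Complex.abs_re_le_norm _
      _ ≤ numRad A * ‖u‖ ^ 2 := inner_le_numRad A u
  have hCle : ‖imOp A‖ ≤ numRad A := by
    apply sa_norm_le _ (imOp_sa A) (numRad_nonneg A)
    intro u
    rw [inner_imOp]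
    calc ‖((-⟪A u, u⟫.im : ℝ) : ℂ)‖ = |⟪A u, u⟫.im| := by
          rw [Complex.norm_real, Real.norm_eq_abs, abs_neg]
      _ ≤ ‖⟪A u, u⟫‖ := by exact Complex.abs_im_le_norm _
      _ ≤ numRad A * ‖u‖ ^ 2 := inner_le_numRad A u
  have hlow : ‖reOp A * reOp A + imOp A * imOp A‖ ≤ 2 * numRad A ^ 2 := by
    calc ‖reOp A * reOp A + imOp A * imOp A‖
        ≤ ‖reOp A * reOp A‖ + ‖imOp A * imOp A‖ := norm_add_le _ _
      _ ≤ ‖reOp A‖ * ‖reOp A‖ + ‖imOp A‖ * ‖imOp A‖ :=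
          add_le_add (norm_mul_le _ _) (norm_mul_le _ _)
      _ ≤ 2 * numRad A ^ 2 := by
          nlinarith [norm_nonneg (reOp A), norm_nonneg (imOp A), numRad_nonneg A]
  constructor
  · rw [hnD] at hlow; linarith
  · have hub : ∀ u : {x : H // ‖x‖ = 1},
        ‖⟪A u, (u : H)⟫‖ ≤ Real.sqrt ‖reOp A * reOp A + imOp A * imOp A‖ := by
      rintro ⟨u, hu⟩
      have hre2 : ⟪A u, u⟫.re ^ 2 ≤ ‖reOp A u‖ ^ 2 := by
        have h := norm_inner_le_norm (𝕜 := ℂ) (reOp A u) u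
        rw [inner_reOp, Complex.norm_real, Real.norm_eq_abs, hu, mul_one] at h
        nlinarith [abs_nonneg (⟪A u, u⟫.re), sq_abs (⟪A u, u⟫.re), h]
      have him2 : ⟪A u, u⟫.im ^ 2 ≤ ‖imOp A u‖ ^ 2 := by
        have h := norm_inner_le_norm (𝕜 := ℂ) (imOp A u) u
        rw [inner_imOp, Complex.norm_real, Real.norm_eq_abs, hu, mul_one, abs_neg] at h
        nlinarith [abs_nonneg (⟪A u, u⟫.im), sq_abs (⟪A u, u⟫.im), h]
      have hb' : ⟪reOp A (reOp A u), u⟫ = ((‖reOp A u‖ ^ 2 : ℝ) : ℂ) :=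
        calc ⟪reOp A (reOp A u), u⟫ = ⟪reOp A u, reOp A u⟫ :=
              (reOp_sa A).isSymmetric (reOp A u) u
          _ = ((‖reOp A u‖ ^ 2 : ℝ) : ℂ) := by
              rw [inner_self_eq_norm_sq_to_K]; norm_cast
      have hc' : ⟪imOp A (imOp A u), u⟫ = ((‖imOp A u‖ ^ 2 : ℝ) : ℂ) :=
        calc ⟪imOp A (imOp A u), u⟫ = ⟪imOp A u, imOp A u⟫ :=
              (imOp_sa A).isSymmetric (imOp A u) u
          _ = ((‖imOp A u‖ ^ 2 : ℝ) : ℂ) := by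
              rw [inner_self_eq_norm_sq_to_K]; norm_cast
      have hsum : ⟪(reOp A * reOp A + imOp A * imOp A) u, u⟫
          = ((‖reOp A u‖ ^ 2 + ‖imOp A u‖ ^ 2 : ℝ) : ℂ) := by
        rw [ContinuousLinearMap.add_apply, ContinuousLinearMap.mul_apply,
          ContinuousLinearMap.mul_apply, inner_add_left, hb', hc']
        push_cast; ring
      have hDn : ‖reOp A u‖ ^ 2 + ‖imOp A u‖ ^ 2
          ≤ ‖reOp A * reOp A + imOp A * imOp A‖ := by
        calc ‖reOp A u‖ ^ 2 + ‖imOp A u‖ ^ 2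
            = ‖⟪(reOp A * reOp A + imOp A * imOp A) u, u⟫‖ := by
              rw [hsum, Complex.norm_real, Real.norm_eq_abs, abs_of_nonneg (by positivity)]
          _ ≤ ‖(reOp A * reOp A + imOp A * imOp A) u‖ * ‖u‖ := norm_inner_le_norm _ _
          _ ≤ ‖reOp A * reOp A + imOp A * imOp A‖ * ‖u‖ * ‖u‖ := by
              gcongr
              exact (reOp A * reOp A + imOp A * imOp A).le_opNorm u
          _ = ‖reOp A * reOp A + imOp A * imOp A‖ := by rw [hu]; ring
      have hsq : ‖⟪A u, (u : H)⟫‖ ^ 2 ≤ ‖reOp A * reOp A + imOp A * imOp A‖ := by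
        have hzz : ‖⟪A u, (u : H)⟫‖ ^ 2 = ⟪A u, u⟫.re ^ 2 + ⟪A u, u⟫.im ^ 2 := by
          rw [Complex.sq_norm, Complex.normSq_apply]; ring
        linarith
      have h3 := Real.sqrt_le_sqrt hsq
      rwa [Real.sqrt_sq (norm_nonneg _)] at h3
    have hle : numRad A ≤ Real.sqrt ‖reOp A * reOp A + imOp A * imOp A‖ := ciSup_le hub
    have h2 : numRad A ^ 2 ≤ ‖reOp A * reOp A + imOp A * imOp A‖ := by
      have h4 := pow_le_pow_left₀ (numRad_nonneg A) hle 2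
      rwa [Real.sq_sqrt (norm_nonneg _)] at h4
    rw [hnD] at h2
    linarith
end

section
/- For a bounded linear operator A on a complex Hilbert space, w(A) ≤ (1/2)(‖A‖ + ‖A²‖^{1/2}). -/
variable {H : Type*} [NormedAddCommGroup H] [InnerProductSpace ℂ H] [CompleteSpace H]

set_option maxHeartbeats 1000000

open ContinuousLinearMap RCLike Polynomial
open scoped InnerProductSpace NNReal ENNReal

section KittanehAux

lemma kitt_sr_swap {A : Type*} [NormedRing A] [NormedAlgebra ℂ A] (a b : A) :
    spectralRadius ℂ (a * b) = spectralRadius ℂ (b * a) := by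
  have key : ∀ x y : A, spectralRadius ℂ (x * y) ≤ spectralRadius ℂ (y * x) := by
    intro x y
    rw [spectralRadius, spectralRadius]
    refine iSup₂_le fun k hk => ?_
    rcases eq_or_ne k 0 with rfl | hk0
    · simp
    · have : k ∈ spectrum ℂ (y * x) \ {0} := by
        rw [← spectrum.nonzero_mul_comm]
        exact ⟨hk, hk0⟩
      exact le_iSup₂ (f := fun k (_ : k ∈ spectrum ℂ (y * x)) => (‖k‖₊ : ℝ≥0∞)) k this.1
  exact le_antisymm (key a b) (key b a)

lemma kitt_sqrt_amgm {p q : ℝ} (hp : 0 ≤ p) (hq : 0 ≤ q) :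
    Real.sqrt p * Real.sqrt q ≤ (p + q) / 2 := by
  rw [← Real.sqrt_mul hp q]
  have h1 : p * q ≤ ((p + q) / 2) ^ 2 := by nlinarith [sq_nonneg (p - q)]
  calc Real.sqrt (p * q) ≤ Real.sqrt (((p + q) / 2) ^ 2) := Real.sqrt_le_sqrt h1
    _ = (p + q) / 2 := Real.sqrt_sq (by positivity)

lemma kitt_sqrt_add_le {p q : ℝ} (hp : 0 ≤ p) (hq : 0 ≤ q) :
    Real.sqrt (p + q) ≤ Real.sqrt p + Real.sqrt q := by
  have h1 : p + q ≤ (Real.sqrt p + Real.sqrt q) ^ 2 := by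
    nlinarith [Real.sq_sqrt hp, Real.sq_sqrt hq, Real.sqrt_nonneg p, Real.sqrt_nonneg q]
  calc Real.sqrt (p + q) ≤ Real.sqrt ((Real.sqrt p + Real.sqrt q) ^ 2) := Real.sqrt_le_sqrt h1
    _ = _ := Real.sqrt_sq (by positivity)

lemma kitt_poly_intertwine (a : H →L[ℂ] H) (p : ℝ[X]) :
    a * aeval (star a * a) p = aeval (a * star a) p * a := by
  induction p using Polynomial.induction_on with
  | C r => simpa using (Algebra.commutes r a).symm
  | add p q hp hq => simp [mul_add, add_mul, hp, hq]
  | monomial n r hn =>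
    have key : ∀ m : ℕ, a * (star a * a) ^ m = (a * star a) ^ m * a := by
      intro m
      induction m with
      | zero => simp
      | succ k ih =>
        rw [pow_succ, ← mul_assoc, ih, pow_succ]
        noncomm_ring
    simp only [map_mul, aeval_C, map_pow, aeval_X]
    calc a * (algebraMap ℝ _ r * (star a * a) ^ (n + 1))
        = algebraMap ℝ _ r * (a * (star a * a) ^ (n + 1)) := by
          rw [← mul_assoc, ← Algebra.commutes, mul_assoc]
      _ = algebraMap ℝ _ r * ((a * star a) ^ (n + 1) * a) := by rw [key]
      _ = algebraMap ℝ _ r * (a * star a) ^ (n + 1) * a := by rw [mul_assoc]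

end KittanehAux

section KittanehMain

lemma kitt_inner_mono {p q : H →L[ℂ] H} (h : p ≤ q) (x : H) :
    re ⟪p x, x⟫_ℂ ≤ re ⟪q x, x⟫_ℂ := by
  have := ((ContinuousLinearMap.le_def p q).mp h).inner_nonneg_left x
  rw [ContinuousLinearMap.sub_apply, inner_sub_left, RCLike.nonneg_iff, map_sub] at this
  linarith [this.1]

lemma kitt_inner_nonneg {p : H →L[ℂ] H} (h : 0 ≤ p) (x : H) :
    0 ≤ re ⟪p x, x⟫_ℂ := by
  simpa using kitt_inner_mono h x

lemma kitt_inner_le_norm {p : H →L[ℂ] H} {x : H} (hx : ‖x‖ = 1) :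
    re ⟪p x, x⟫_ℂ ≤ ‖p‖ := by
  calc re ⟪p x, x⟫_ℂ ≤ ‖⟪p x, x⟫_ℂ‖ := re_le_norm _
    _ ≤ ‖p x‖ * ‖x‖ := norm_inner_le_norm _ _
    _ ≤ ‖p‖ * ‖x‖ * ‖x‖ := by gcongr; exact p.le_opNorm x
    _ = ‖p‖ := by rw [hx]; ring

lemma kitt_sa_inner_move {p : H →L[ℂ] H} (hp : IsSelfAdjoint p) (x y : H) :
    ⟪p x, y⟫_ℂ = ⟪x, p y⟫_ℂ := by
  rw [← ContinuousLinearMap.adjoint_inner_left, hp.adjoint_eq]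

lemma kitt_norm_add_le_aux (s t s2 t2 : H →L[ℂ] H)
    (hs2sa : IsSelfAdjoint s2) (ht2sa : IsSelfAdjoint t2)
    (hs2mul : s2 * s2 = s) (ht2mul : t2 * t2 = t)
    {N κ : ℝ} (hs2N : ‖s2‖ * ‖s2‖ ≤ N) (ht2N : ‖t2‖ * ‖t2‖ ≤ N)
    (hκ : ‖s2 * t2‖ ≤ κ) (hN0 : 0 ≤ N) (hκ0 : 0 ≤ κ) :
    ‖s + t‖ ≤ N + κ := by
  refine ContinuousLinearMap.opNorm_le_bound _ (by positivity) fun z => ?_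
  have happ : (s + t) z = s2 (s2 z) + t2 (t2 z) := by
    rw [ContinuousLinearMap.add_apply, ← hs2mul, ← ht2mul, ContinuousLinearMap.mul_apply,
      ContinuousLinearMap.mul_apply]
  set x := s2 z with hxdef
  set y := t2 z with hydef
  have key : ‖(s + t) z‖ ^ 2 ≤ (N + κ) * re ⟪(s + t) z, z⟫_ℂ := by
    have e1 : ‖s2 x‖ ^ 2 ≤ N * ‖x‖ ^ 2 := by
      have h1 := s2.le_opNorm x
      have h0 : (0:ℝ) ≤ ‖s2 x‖ := norm_nonneg _
      have h2 : (0:ℝ) ≤ ‖x‖ := norm_nonneg _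
      nlinarith
    have e2 : ‖t2 y‖ ^ 2 ≤ N * ‖y‖ ^ 2 := by
      have h1 := t2.le_opNorm y
      have h0 : (0:ℝ) ≤ ‖t2 y‖ := norm_nonneg _
      have h2 : (0:ℝ) ≤ ‖y‖ := norm_nonneg _
      nlinarith
    have e3 : re ⟪s2 x, t2 y⟫_ℂ ≤ κ * (‖x‖ * ‖y‖) := by
      calc re ⟪s2 x, t2 y⟫_ℂ = re ⟪x, s2 (t2 y)⟫_ℂ := by rw [kitt_sa_inner_move hs2sa]
        _ ≤ ‖⟪x, s2 (t2 y)⟫_ℂ‖ := re_le_norm _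
        _ ≤ ‖x‖ * ‖s2 (t2 y)‖ := norm_inner_le_norm _ _
        _ = ‖x‖ * ‖(s2 * t2) y‖ := by rw [ContinuousLinearMap.mul_apply]
        _ ≤ ‖x‖ * (κ * ‖y‖) := by
            gcongr
            exact ((s2 * t2).le_opNorm y).trans (by gcongr)
        _ = κ * (‖x‖ * ‖y‖) := by ring
    have hxz : ‖x‖ ^ 2 = re ⟪s z, z⟫_ℂ := by
      rw [← hs2mul, ContinuousLinearMap.mul_apply, kitt_sa_inner_move hs2sa,
        ← inner_self_eq_norm_sq (𝕜 := ℂ) x]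
    have hyz : ‖y‖ ^ 2 = re ⟪t z, z⟫_ℂ := by
      rw [← ht2mul, ContinuousLinearMap.mul_apply, kitt_sa_inner_move ht2sa,
        ← inner_self_eq_norm_sq (𝕜 := ℂ) y]
    calc ‖(s + t) z‖ ^ 2 = ‖s2 x + t2 y‖ ^ 2 := by rw [happ]
      _ = ‖s2 x‖ ^ 2 + 2 * re ⟪s2 x, t2 y⟫_ℂ + ‖t2 y‖ ^ 2 := norm_add_sq (𝕜 := ℂ) _ _
      _ ≤ N * ‖x‖ ^ 2 + 2 * (κ * (‖x‖ * ‖y‖)) + N * ‖y‖ ^ 2 := by linarith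
      _ ≤ N * ‖x‖ ^ 2 + κ * (‖x‖^2 + ‖y‖^2) + N * ‖y‖ ^ 2 := by nlinarith [sq_nonneg (‖x‖ - ‖y‖)]
      _ = (N + κ) * (‖x‖ ^ 2 + ‖y‖ ^ 2) := by ring
      _ = (N + κ) * re ⟪(s + t) z, z⟫_ℂ := by
          have hsum : re ⟪(s + t) z, z⟫_ℂ = re ⟪s z, z⟫_ℂ + re ⟪t z, z⟫_ℂ := by
            rw [ContinuousLinearMap.add_apply, inner_add_left, map_add]
          rw [hsum, hxz, hyz]
  have final : ‖(s + t) z‖ ^ 2 ≤ (N + κ) * (‖(s + t) z‖ * ‖z‖) := by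
    refine key.trans ?_
    gcongr
    calc re ⟪(s + t) z, z⟫_ℂ ≤ ‖⟪(s + t) z, z⟫_ℂ‖ := re_le_norm _
      _ ≤ ‖(s + t) z‖ * ‖z‖ := norm_inner_le_norm _ _
  rcases eq_or_lt_of_le (norm_nonneg ((s + t) z)) with h0 | h0
  · rw [← h0]; positivity
  · nlinarith

lemma kitt_ssq_mul (d : H →L[ℂ] H) :
    cfc (fun y : ℝ => Real.sqrt (Real.sqrt y)) d * cfc (fun y : ℝ => Real.sqrt (Real.sqrt y)) d
      = cfc (fun y : ℝ => Real.sqrt y) d := by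
  have cont : Continuous fun y : ℝ => Real.sqrt (Real.sqrt y) :=
    Real.continuous_sqrt.comp Real.continuous_sqrt
  rw [← cfc_mul _ _ d cont.continuousOn cont.continuousOn]
  exact cfc_congr fun y _ => Real.mul_self_sqrt (Real.sqrt_nonneg y)

end KittanehMain

section KittanehNontrivial

variable [Nontrivial H]

lemma kitt_cfc_intertwine (a : H →L[ℂ] H) (f : ℝ → ℝ) (hf : Continuous f) :
    a * cfc f (star a * a) = cfc f (a * star a) * a := by
  set b := star a * a with hbdef
  set c := a * star a with hcdef
  have hb : (0:H →L[ℂ] H) ≤ b := star_mul_self_nonneg a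
  have hc : (0:H →L[ℂ] H) ≤ c := mul_star_self_nonneg a
  have hbsa : IsSelfAdjoint b := IsSelfAdjoint.star_mul_self a
  have hcsa : IsSelfAdjoint c := IsSelfAdjoint.mul_star_self a
  set M : ℝ := ‖b‖ ⊔ ‖c‖ with hM
  have hσb : ∀ x ∈ spectrum ℝ b, x ∈ Set.Icc (0:ℝ) M := fun x hx =>
    ⟨spectrum_nonneg_of_nonneg hb hx, le_sup_of_le_left <| (le_abs_self x).trans <|
      (Real.norm_eq_abs x) ▸ spectrum.norm_le_norm_of_mem hx⟩
  have hσc : ∀ x ∈ spectrum ℝ c, x ∈ Set.Icc (0:ℝ) M := fun x hx =>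
    ⟨spectrum_nonneg_of_nonneg hc hx, le_sup_of_le_right <| (le_abs_self x).trans <|
      (Real.norm_eq_abs x) ▸ spectrum.norm_le_norm_of_mem hx⟩
  have key : ∀ δ : ℝ, 0 < δ → ‖a * cfc f b - cfc f c * a‖ ≤ 2 * ‖a‖ * δ := by
    intro δ hδ
    obtain ⟨p, hp⟩ := exists_polynomial_near_of_continuousOn 0 M f hf.continuousOn δ hδ
    have h1 : a * cfc f b - cfc f c * a
        = a * (cfc f b - cfc p.eval b) - (cfc f c - cfc p.eval c) * a := by
      have := kitt_poly_intertwine a p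
      rw [← cfc_polynomial p b hbsa, ← cfc_polynomial p c hcsa] at this
      rw [mul_sub, sub_mul, this]
      abel
    have h2 : ‖cfc f b - cfc p.eval b‖ ≤ δ := by
      rw [← cfc_sub f p.eval b hf.continuousOn (Polynomial.continuous p).continuousOn]
      refine norm_cfc_le hδ.le fun x hx => ?_
      rw [Real.norm_eq_abs, abs_sub_comm]
      exact (hp x (hσb x hx)).le
    have h3 : ‖cfc f c - cfc p.eval c‖ ≤ δ := by
      rw [← cfc_sub f p.eval c hf.continuousOn (Polynomial.continuous p).continuousOn]
      refine norm_cfc_le hδ.le fun x hx => ?_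
      rw [Real.norm_eq_abs, abs_sub_comm]
      exact (hp x (hσc x hx)).le
    calc ‖a * cfc f b - cfc f c * a‖
        ≤ ‖a * (cfc f b - cfc p.eval b)‖ + ‖(cfc f c - cfc p.eval c) * a‖ := by
          rw [h1]; exact norm_sub_le _ _
      _ ≤ ‖a‖ * δ + δ * ‖a‖ := by
          gcongr
          · exact (norm_mul_le _ _).trans (by gcongr)
          · exact (norm_mul_le _ _).trans (by gcongr)
      _ = 2 * ‖a‖ * δ := by ring
  have : ‖a * cfc f b - cfc f c * a‖ ≤ 0 := by
    by_contra h
    push_neg at h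
    set ε := ‖a * cfc f b - cfc f c * a‖ with hε
    have h2 := key (ε / (2 * ‖a‖ + 1)) (by positivity)
    have : 2 * ‖a‖ * (ε / (2 * ‖a‖ + 1)) < ε := by
      rw [mul_div_assoc']
      rw [div_lt_iff₀ (by positivity)]
      nlinarith [norm_nonneg a]
    linarith
  have := le_antisymm this (norm_nonneg _)
  rwa [norm_eq_zero, sub_eq_zero] at this

lemma kitt_spec_b (a : H →L[ℂ] H) (x : ℝ) (hx : x ∈ spectrum ℝ (star a * a)) :
    0 ≤ x ∧ x ≤ ‖a‖ * ‖a‖ :=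
  ⟨spectrum_nonneg_of_nonneg (star_mul_self_nonneg a) hx,
    ((le_abs_self x).trans ((Real.norm_eq_abs x) ▸ spectrum.norm_le_norm_of_mem hx)).trans
      (le_of_eq (CStarRing.norm_star_mul_self))⟩

lemma kitt_spec_c (a : H →L[ℂ] H) (x : ℝ) (hx : x ∈ spectrum ℝ (a * star a)) :
    0 ≤ x ∧ x ≤ ‖a‖ * ‖a‖ :=
  ⟨spectrum_nonneg_of_nonneg (mul_star_self_nonneg a) hx,
    ((le_abs_self x).trans ((Real.norm_eq_abs x) ▸ spectrum.norm_le_norm_of_mem hx)).trans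
      (le_of_eq (CStarRing.norm_self_mul_star))⟩

variable (a : H →L[ℂ] H) {ε : ℝ}

lemma kitt_kappa_sq (hε : 0 < ε) :
    ‖cfc (fun x : ℝ => Real.sqrt (Real.sqrt x)) (star a * a)
      * cfc (fun x : ℝ => Real.sqrt (Real.sqrt x)) (a * star a)‖
    * ‖cfc (fun x : ℝ => Real.sqrt (Real.sqrt x)) (star a * a)
      * cfc (fun x : ℝ => Real.sqrt (Real.sqrt x)) (a * star a)‖
    ≤ ‖a * a‖ + 2 * ε * ‖a‖ := by
  set b := star a * a with hbdef
  set c := a * star a with hcdef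
  have hbsa : IsSelfAdjoint b := IsSelfAdjoint.star_mul_self a
  have hcsa : IsSelfAdjoint c := IsSelfAdjoint.mul_star_self a
  -- continuity facts
  have cont_sqrt : Continuous fun x : ℝ => Real.sqrt x := Real.continuous_sqrt
  have cont_ssqrt : Continuous fun x : ℝ => Real.sqrt (Real.sqrt x) :=
    Real.continuous_sqrt.comp Real.continuous_sqrt
  have hpos : ∀ x : ℝ, Real.sqrt x + ε ≠ 0 := fun x => by positivity
  have cont_rs : Continuous fun x : ℝ => (Real.sqrt x + ε)⁻¹ :=
    (Real.continuous_sqrt.add continuous_const).inv₀ hpos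
  have cont_rsh : Continuous fun x : ℝ => (Real.sqrt (Real.sqrt x + ε))⁻¹ := by
    refine Continuous.inv₀ (Real.continuous_sqrt.comp
      (Real.continuous_sqrt.add continuous_const)) fun x => ?_
    have : 0 < Real.sqrt x + ε := by positivity
    positivity
  have cont_phi : Continuous fun x : ℝ => x / (Real.sqrt x + ε) :=
    continuous_id.div (Real.continuous_sqrt.add continuous_const) hpos
  -- the elements
  set s2 := cfc (fun x : ℝ => Real.sqrt (Real.sqrt x)) b with hs2def
  set t2 := cfc (fun x : ℝ => Real.sqrt (Real.sqrt x)) c with ht2def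
  set s := cfc (fun x : ℝ => Real.sqrt x) b with hsdef
  set t := cfc (fun x : ℝ => Real.sqrt x) c with htdef
  set rs := cfc (fun x : ℝ => (Real.sqrt x + ε)⁻¹) b with hrsdef
  set rsh := cfc (fun x : ℝ => (Real.sqrt (Real.sqrt x + ε))⁻¹) b with hrshdef
  set φ := cfc (fun x : ℝ => x / (Real.sqrt x + ε)) c with hφdef
  set ψ := cfc (fun x : ℝ => x / (Real.sqrt x + ε)) b with hψdef
  set u := a * rs with hudef
  set v := a * rsh with hvdef
  -- selfadjointness
  have hs2sa : IsSelfAdjoint s2 := cfc_predicate _ b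
  have ht2sa : IsSelfAdjoint t2 := cfc_predicate _ c
  have hssa : IsSelfAdjoint s := cfc_predicate _ b
  have htsa : IsSelfAdjoint t := cfc_predicate _ c
  have hrssa : IsSelfAdjoint rs := cfc_predicate _ b
  have hrshsa : IsSelfAdjoint rsh := cfc_predicate _ b
  have hφsa : IsSelfAdjoint φ := cfc_predicate _ c
  have hψsa : IsSelfAdjoint ψ := cfc_predicate _ b
  -- multiplication identities
  have hs2mul : s2 * s2 = s := by
    rw [hs2def, hsdef, ← cfc_mul _ _ b cont_ssqrt.continuousOn cont_ssqrt.continuousOn]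
    exact cfc_congr fun x _ => Real.mul_self_sqrt (Real.sqrt_nonneg x)
  have ht2mul : t2 * t2 = t := by
    rw [ht2def, htdef, ← cfc_mul _ _ c cont_ssqrt.continuousOn cont_ssqrt.continuousOn]
    exact cfc_congr fun x _ => Real.mul_self_sqrt (Real.sqrt_nonneg x)
  have hrshmul : rsh * rsh = rs := by
    rw [hrshdef, hrsdef, ← cfc_mul _ _ b cont_rsh.continuousOn cont_rsh.continuousOn]
    refine cfc_congr fun x _ => ?_
    rw [← mul_inv]
    rw [Real.mul_self_sqrt (by positivity)]
  have hc_eq : cfc (fun x : ℝ => x) c = c := cfc_id' ℝ c hcsa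
  have hb_eq : cfc (fun x : ℝ => x) b = b := cfc_id' ℝ b hbsa
  have hint_rs : a * rs = cfc (fun x : ℝ => (Real.sqrt x + ε)⁻¹) c * a := by
    rw [hrsdef, hbdef, hcdef]
    exact kitt_cfc_intertwine a _ cont_rs
  have hars : a * rs * star a = φ := by
    rw [hint_rs, hφdef, mul_assoc, ← hcdef]
    nth_rewrite 2 [← hc_eq]
    rw [← cfc_mul (fun x : ℝ => (Real.sqrt x + ε)⁻¹) (fun x : ℝ => x) c
      cont_rs.continuousOn continuous_id.continuousOn]
    refine cfc_congr fun x _ => ?_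
    simp [div_eq_inv_mul]
  -- v * star v = φ
  have hvv : v * star v = φ := by
    have h1 : star v = rsh * star a := by rw [hvdef, star_mul, hrshsa.star_eq]
    have h2 : v * star v = a * rs * star a := by
      rw [hvdef, h1]
      calc a * rsh * (rsh * star a) = a * (rsh * rsh) * star a := by noncomm_ring
        _ = a * rs * star a := by rw [hrshmul]
    rw [h2, hars]
  -- star v * v norm bound: ‖v‖^2 = ‖φ‖ ≤ ‖a‖
  have hφnorm : ‖φ‖ ≤ ‖a‖ := by
    rw [hφdef]
    refine norm_cfc_le (norm_nonneg a) fun x hx => ?_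
    obtain ⟨hx0, hxM⟩ := kitt_spec_c a x hx
    rw [Real.norm_eq_abs, abs_of_nonneg (by positivity)]
    have h1 : x / (Real.sqrt x + ε) ≤ Real.sqrt x := by
      rw [div_le_iff₀ (by positivity)]
      nlinarith [Real.sq_sqrt hx0, Real.sqrt_nonneg x]
    refine h1.trans ?_
    calc Real.sqrt x ≤ Real.sqrt (‖a‖ * ‖a‖) := Real.sqrt_le_sqrt hxM
      _ = ‖a‖ := by rw [Real.sqrt_mul_self (norm_nonneg a)]
  have hvnorm : ‖v‖ * ‖v‖ ≤ ‖a‖ := by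
    rw [← CStarRing.norm_self_mul_star (x := v), hvv]
    exact hφnorm
  -- ‖u‖ ≤ 1
  have hunorm : ‖u‖ ≤ 1 := by
    have h1 : star u * u = cfc (fun x : ℝ => x / ((Real.sqrt x + ε) * (Real.sqrt x + ε))) b := by
      have h2 : star u = rs * star a := by rw [hudef, star_mul, hrssa.star_eq]
      rw [hudef, h2]
      have h3 : rs * star a * (a * rs) = rs * b * rs := by
        rw [hbdef]; noncomm_ring
      rw [h3]
      conv_lhs => rw [← hb_eq, hrsdef]
      rw [← cfc_mul (fun x : ℝ => (Real.sqrt x + ε)⁻¹) (fun x : ℝ => x) b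
        cont_rs.continuousOn continuous_id.continuousOn,
        ← cfc_mul (fun x : ℝ => (Real.sqrt x + ε)⁻¹ * x) (fun x : ℝ => (Real.sqrt x + ε)⁻¹) b
        (cont_rs.mul continuous_id).continuousOn cont_rs.continuousOn]
      refine cfc_congr fun x _ => ?_
      field_simp
    have h4 : ‖star u * u‖ ≤ 1 := by
      rw [h1]
      refine norm_cfc_le one_pos.le fun x hx => ?_
      obtain ⟨hx0, _⟩ := kitt_spec_b a x hx
      rw [Real.norm_eq_abs, abs_of_nonneg (by positivity)]
      rw [div_le_one (by positivity)]
      nlinarith [Real.sq_sqrt hx0, Real.sqrt_nonneg x]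
    have h5 : ‖u‖ * ‖u‖ ≤ 1 := by rwa [← CStarRing.norm_star_mul_self (x := u)]
    nlinarith [norm_nonneg u]

  -- nonnegativity facts
  have ht0 : (0:H →L[ℂ] H) ≤ t := by
    rw [htdef]; exact cfc_nonneg fun x _ => Real.sqrt_nonneg x
  have hψ0 : (0:H →L[ℂ] H) ≤ ψ := by
    rw [hψdef]
    refine cfc_nonneg fun x hx => ?_
    have := (kitt_spec_b a x hx).1
    positivity
  have hsnorm : ‖s‖ ≤ ‖a‖ := by
    rw [hsdef]
    refine norm_cfc_le (norm_nonneg a) fun x hx => ?_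
    obtain ⟨hx0, hxM⟩ := kitt_spec_b a x hx
    rw [Real.norm_eq_abs, abs_of_nonneg (Real.sqrt_nonneg x)]
    calc Real.sqrt x ≤ Real.sqrt (‖a‖ * ‖a‖) := Real.sqrt_le_sqrt hxM
      _ = ‖a‖ := by rw [Real.sqrt_mul_self (norm_nonneg a)]
  -- pointwise inequalities as operator inequalities
  have hptw : ∀ x : ℝ, 0 ≤ x → Real.sqrt x ≤ x / (Real.sqrt x + ε) + ε := by
    intro x hx0
    have hd : (0:ℝ) < Real.sqrt x + ε := by positivity
    have h2 : (Real.sqrt x - ε) * (Real.sqrt x + ε) ≤ x := by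
      nlinarith [Real.sq_sqrt hx0, Real.sqrt_nonneg x]
    have h3 : Real.sqrt x - ε ≤ x / (Real.sqrt x + ε) := (le_div_iff₀ hd).mpr h2
    linarith
  have htφ : t ≤ φ + ε • (1 : H →L[ℂ] H) := by
    have h1 : φ + ε • (1 : H →L[ℂ] H) = cfc (fun x : ℝ => x / (Real.sqrt x + ε) + ε) c := by
      rw [hφdef, cfc_add c _ _ cont_phi.continuousOn continuousOn_const, cfc_const ε c hcsa,
        Algebra.algebraMap_eq_smul_one]
    rw [h1, htdef]
    exact cfc_mono fun x hx => hptw x (kitt_spec_c a x hx).1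
  have hsψ : s ≤ ψ + ε • (1 : H →L[ℂ] H) := by
    have h1 : ψ + ε • (1 : H →L[ℂ] H) = cfc (fun x : ℝ => x / (Real.sqrt x + ε) + ε) b := by
      rw [hψdef, cfc_add b _ _ cont_phi.continuousOn continuousOn_const, cfc_const ε b hbsa,
        Algebra.algebraMap_eq_smul_one]
    rw [h1, hsdef]
    exact cfc_mono fun x hx => hptw x (kitt_spec_b a x hx).1
  -- rs * b = ψ
  have hrsb : rs * b = ψ := by
    conv_lhs => rw [← hb_eq]
    rw [hrsdef, hψdef,
      ← cfc_mul (fun x : ℝ => (Real.sqrt x + ε)⁻¹) (fun x : ℝ => x) b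
        cont_rs.continuousOn continuous_id.continuousOn]
    refine cfc_congr fun x _ => ?_
    simp [div_eq_inv_mul]
  -- step 1 : κ² = ‖s2 * t * s2‖
  have step1 : ‖s2 * t2‖ * ‖s2 * t2‖ = ‖s2 * t * s2‖ := by
    rw [← CStarRing.norm_self_mul_star (x := s2 * t2)]
    congr 1
    rw [star_mul, hs2sa.star_eq, ht2sa.star_eq]
    calc s2 * t2 * (t2 * s2) = s2 * (t2 * t2) * s2 := by noncomm_ring
      _ = s2 * t * s2 := by rw [ht2mul]
  -- step 2
  have step2 : s2 * t * s2 ≤ s2 * φ * s2 + ε • s := by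
    have h1 := star_left_conjugate_le_conjugate htφ s2
    rw [hs2sa.star_eq] at h1
    refine h1.trans (le_of_eq ?_)
    have : s2 * (φ + ε • (1:H →L[ℂ] H)) * s2 = s2 * φ * s2 + ε • (s2 * s2) := by
      rw [mul_add, add_mul]
      congr 1
      rw [mul_smul_comm, smul_mul_assoc, mul_one]
    rw [this, hs2mul]
  have step3 : (0:H →L[ℂ] H) ≤ s2 * t * s2 := by
    have := star_left_conjugate_nonneg ht0 s2
    rwa [hs2sa.star_eq] at this
  have step4 : ‖s2 * t * s2‖ ≤ ‖s2 * φ * s2‖ + ε * ‖a‖ := by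
    calc ‖s2 * t * s2‖ ≤ ‖s2 * φ * s2 + ε • s‖ :=
          CStarAlgebra.norm_le_norm_of_nonneg_of_le step3 step2
      _ ≤ ‖s2 * φ * s2‖ + ‖ε • s‖ := norm_add_le _ _
      _ ≤ ‖s2 * φ * s2‖ + ε * ‖a‖ := by
          rw [norm_smul, Real.norm_eq_abs, abs_of_pos hε]
          gcongr
  -- step 5/6 : ‖s2 * φ * s2‖ = ‖star v * s * v‖
  have step56 : ‖s2 * φ * s2‖ = ‖star v * s * v‖ := by
    have h1 : s2 * φ * s2 = (s2 * v) * star (s2 * v) := by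
      rw [star_mul, hs2sa.star_eq, ← hvv]
      noncomm_ring
    have h2 : star (s2 * v) * (s2 * v) = star v * s * v := by
      rw [star_mul, hs2sa.star_eq]
      calc star v * s2 * (s2 * v) = star v * (s2 * s2) * v := by noncomm_ring
        _ = star v * s * v := by rw [hs2mul]
    rw [h1, CStarRing.norm_self_mul_star, ← CStarRing.norm_star_mul_self (x := s2 * v), h2]
  -- step 7/8
  have step7 : star v * s * v ≤ star v * ψ * v + ε • (star v * v) := by
    have h1 := star_left_conjugate_le_conjugate hsψ v
    refine h1.trans (le_of_eq ?_)
    rw [mul_add, add_mul]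
    congr 1
    rw [mul_smul_comm, smul_mul_assoc, mul_one]
  have step8pre : (0:H →L[ℂ] H) ≤ star v * s * v := by
    refine star_left_conjugate_nonneg ?_ v
    rw [hsdef]; exact cfc_nonneg fun x _ => Real.sqrt_nonneg x
  have hvsv : ‖star v * v‖ ≤ ‖a‖ := by
    rw [CStarRing.norm_star_mul_self]; exact hvnorm
  have step8 : ‖star v * s * v‖ ≤ ‖star v * ψ * v‖ + ε * ‖a‖ := by
    calc ‖star v * s * v‖ ≤ ‖star v * ψ * v + ε • (star v * v)‖ :=
          CStarAlgebra.norm_le_norm_of_nonneg_of_le step8pre step7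
      _ ≤ ‖star v * ψ * v‖ + ‖ε • (star v * v)‖ := norm_add_le _ _
      _ ≤ ‖star v * ψ * v‖ + ε * ‖a‖ := by
          rw [norm_smul, Real.norm_eq_abs, abs_of_pos hε]
          gcongr
  -- step 9 : spectral radius argument
  have hψφ : ψ * φ = star u * (a * a) * star u := by
    have h2 : star u = rs * star a := by rw [hudef, star_mul, hrssa.star_eq]
    rw [h2]
    symm
    calc (rs * star a) * (a * a) * (rs * star a)
        = rs * (star a * a) * (a * rs * star a) := by noncomm_ring
      _ = rs * b * φ := by rw [← hbdef, hars]
      _ = ψ * φ := by rw [hrsb]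
  have step9 : ‖star v * ψ * v‖ ≤ ‖a * a‖ := by
    have hXsa : IsSelfAdjoint (star v * ψ * v) := hψsa.conjugate' v
    have hr1 : spectralRadius ℂ (star v * ψ * v) = spectralRadius ℂ (ψ * (v * star v)) := by
      rw [mul_assoc]
      rw [kitt_sr_swap (star v) (ψ * v)]
      exact congrArg _ (mul_assoc ψ v (star v))
    have hr2 : spectralRadius ℂ (ψ * (v * star v)) = spectralRadius ℂ (star u * (a * a) * star u) := by
      rw [hvv, hψφ]
    have hr3 : spectralRadius ℂ (star u * (a * a) * star u) ≤ ‖star u * (a * a) * star u‖₊ :=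
      spectrum.spectralRadius_le_nnnorm _
    have hfin : ‖star v * ψ * v‖ ≤ ‖star u * (a * a) * star u‖ := by
      rw [← hXsa.toReal_spectralRadius_complex_eq_norm, hr1, hr2]
      calc (spectralRadius ℂ (star u * (a * a) * star u)).toReal
          ≤ ((‖star u * (a * a) * star u‖₊ : ℝ≥0∞)).toReal :=
            ENNReal.toReal_mono ENNReal.coe_ne_top hr3
        _ = ‖star u * (a * a) * star u‖ := by simp
    refine hfin.trans ?_
    calc ‖star u * (a * a) * star u‖ ≤ ‖star u * (a * a)‖ * ‖star u‖ := norm_mul_le _ _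
      _ ≤ ‖star u‖ * ‖a * a‖ * ‖star u‖ := by gcongr; exact norm_mul_le _ _
      _ ≤ 1 * ‖a * a‖ * 1 := by
          rw [norm_star]
          gcongr
      _ = ‖a * a‖ := by ring
  calc ‖s2 * t2‖ * ‖s2 * t2‖ = ‖s2 * t * s2‖ := step1
    _ ≤ ‖s2 * φ * s2‖ + ε * ‖a‖ := step4
    _ = ‖star v * s * v‖ + ε * ‖a‖ := by rw [step56]
    _ ≤ (‖star v * ψ * v‖ + ε * ‖a‖) + ε * ‖a‖ := by linarith
    _ ≤ ‖a * a‖ + 2 * ε * ‖a‖ := by linarith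


lemma kitt_stepA (hε : 0 < ε) {x : H} (hx : ‖x‖ = 1) :
    ‖(⟪a x, x⟫_ℂ)‖ ≤ (re ⟪(cfc (fun y : ℝ => Real.sqrt y) (star a * a)
      + cfc (fun y : ℝ => Real.sqrt y) (a * star a)) x, x⟫_ℂ + ε) / 2 := by
  set b := star a * a with hbdef
  set c := a * star a with hcdef
  have hbsa : IsSelfAdjoint b := IsSelfAdjoint.star_mul_self a
  have hcsa : IsSelfAdjoint c := IsSelfAdjoint.mul_star_self a
  have hpos : ∀ y : ℝ, Real.sqrt y + ε ≠ 0 := fun y => by positivity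
  have cont_sqrt : Continuous fun y : ℝ => Real.sqrt y := Real.continuous_sqrt
  have cont_rs : Continuous fun y : ℝ => (Real.sqrt y + ε)⁻¹ :=
    (Real.continuous_sqrt.add continuous_const).inv₀ hpos
  have cont_q : Continuous fun y : ℝ => Real.sqrt (Real.sqrt y + ε) :=
    Real.continuous_sqrt.comp (Real.continuous_sqrt.add continuous_const)
  have cont_phi : Continuous fun y : ℝ => y / (Real.sqrt y + ε) :=
    continuous_id.div (Real.continuous_sqrt.add continuous_const) hpos
  have cont_se : Continuous fun y : ℝ => Real.sqrt y + ε :=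
    Real.continuous_sqrt.add continuous_const
  set s := cfc (fun y : ℝ => Real.sqrt y) b with hsdef
  set t := cfc (fun y : ℝ => Real.sqrt y) c with htdef
  set q := cfc (fun y : ℝ => Real.sqrt (Real.sqrt y + ε)) b with hqdef
  set rs := cfc (fun y : ℝ => (Real.sqrt y + ε)⁻¹) b with hrsdef
  set φ := cfc (fun y : ℝ => y / (Real.sqrt y + ε)) c with hφdef
  set u := a * rs with hudef
  have hssa : IsSelfAdjoint s := cfc_predicate _ b
  have htsa : IsSelfAdjoint t := cfc_predicate _ c
  have hqsa : IsSelfAdjoint q := cfc_predicate _ b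
  have hrssa : IsSelfAdjoint rs := cfc_predicate _ b
  have hs0 : (0:H →L[ℂ] H) ≤ s := by
    rw [hsdef]; exact cfc_nonneg fun y _ => Real.sqrt_nonneg y
  have ht0 : (0:H →L[ℂ] H) ≤ t := by
    rw [htdef]; exact cfc_nonneg fun y _ => Real.sqrt_nonneg y
  have hc_eq : cfc (fun y : ℝ => y) c = c := cfc_id' ℝ c hcsa
  -- q * q = s + ε • 1
  have hse : s + ε • (1 : H →L[ℂ] H) = cfc (fun y : ℝ => Real.sqrt y + ε) b := by
    rw [hsdef, cfc_add b _ _ cont_sqrt.continuousOn continuousOn_const, cfc_const ε b hbsa,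
      Algebra.algebraMap_eq_smul_one]
  have hq2 : q * q = s + ε • (1 : H →L[ℂ] H) := by
    rw [hqdef, hse, ← cfc_mul _ _ b cont_q.continuousOn cont_q.continuousOn]
    exact cfc_congr fun y _ => Real.mul_self_sqrt (by positivity)
  -- u * (q * q) = a
  have hueq : u * (q * q) = a := by
    rw [hq2, hse, hudef, mul_assoc, hrsdef,
      ← cfc_mul (fun y : ℝ => (Real.sqrt y + ε)⁻¹) (fun y : ℝ => Real.sqrt y + ε) b
        cont_rs.continuousOn cont_se.continuousOn]
    have h1 : cfc (fun y : ℝ => (Real.sqrt y + ε)⁻¹ * (Real.sqrt y + ε)) b = 1 := by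
      have h2 : cfc (fun y : ℝ => (Real.sqrt y + ε)⁻¹ * (Real.sqrt y + ε)) b
          = cfc (fun _ : ℝ => (1:ℝ)) b := cfc_congr fun y _ => inv_mul_cancel₀ (hpos y)
      rw [h2, cfc_const_one ℝ b]
    rw [h1, mul_one]
  -- u * (q * q) * star u = φ  and φ ≤ t
  have hint_rs : a * rs = cfc (fun y : ℝ => (Real.sqrt y + ε)⁻¹) c * a := by
    rw [hrsdef, hbdef, hcdef]
    exact kitt_cfc_intertwine a _ cont_rs
  have hars : a * rs * star a = φ := by
    rw [hint_rs, hφdef, mul_assoc, ← hcdef]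
    nth_rewrite 2 [← hc_eq]
    rw [← cfc_mul (fun y : ℝ => (Real.sqrt y + ε)⁻¹) (fun y : ℝ => y) c
      cont_rs.continuousOn continuous_id.continuousOn]
    refine cfc_congr fun y _ => ?_
    simp [div_eq_inv_mul]
  have huqu : u * (q * q) * star u = φ := by
    rw [hueq, hudef, star_mul, hrssa.star_eq, ← mul_assoc, hars]
  have hφt : φ ≤ t := by
    rw [hφdef, htdef]
    refine cfc_mono fun y hy => ?_
    have hy0 := (kitt_spec_c a y hy).1
    rw [div_le_iff₀ (by positivity)]
    nlinarith [Real.sq_sqrt hy0, Real.sqrt_nonneg y]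
  -- vector computations
  have hinner : ⟪a x, x⟫_ℂ = ⟪q x, q ((star u) x)⟫_ℂ := by
    conv_lhs => rw [← hueq]
    rw [ContinuousLinearMap.mul_apply]
    have h1 : ⟪u ((q * q) x), x⟫_ℂ = ⟪(q * q) x, (star u) x⟫_ℂ := by
      rw [star_eq_adjoint, ← ContinuousLinearMap.adjoint_inner_right]
    rw [h1, ContinuousLinearMap.mul_apply, kitt_sa_inner_move hqsa]
  have hqx : ‖q x‖ ^ 2 = re ⟪s x, x⟫_ℂ + ε := by
    have h1 : (‖q x‖ : ℝ) ^ 2 = re ⟪(q * q) x, x⟫_ℂ := by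
      rw [ContinuousLinearMap.mul_apply, kitt_sa_inner_move hqsa, ← inner_self_eq_norm_sq (𝕜 := ℂ)]
    rw [h1, hq2, ContinuousLinearMap.add_apply, inner_add_left, map_add]
    congr 1
    have h2 : (ε • (1 : H →L[ℂ] H)) x = (ε : ℂ) • x := by
      rw [ContinuousLinearMap.smul_apply, ContinuousLinearMap.one_apply]
      simp
    rw [h2, inner_smul_left]
    simp [inner_self_eq_norm_sq (𝕜 := ℂ) x, hx]
  have hqux : ‖q ((star u) x)‖ ^ 2 ≤ re ⟪t x, x⟫_ℂ := by
    have h1 : (‖q ((star u) x)‖ : ℝ) ^ 2 = re ⟪(q * q) ((star u) x), (star u) x⟫_ℂ := by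
      rw [ContinuousLinearMap.mul_apply, kitt_sa_inner_move hqsa, ← inner_self_eq_norm_sq (𝕜 := ℂ)]
    have h2 : ⟪(q * q) ((star u) x), (star u) x⟫_ℂ = ⟪(u * (q * q) * star u) x, x⟫_ℂ := by
      rw [ContinuousLinearMap.mul_apply, ContinuousLinearMap.mul_apply]
      rw [star_eq_adjoint, ContinuousLinearMap.adjoint_inner_right]
      rfl
    rw [h1, h2, huqu]
    exact kitt_inner_mono hφt x
  have hsx0 : 0 ≤ re ⟪s x, x⟫_ℂ := kitt_inner_nonneg hs0 x
  have htx0 : 0 ≤ re ⟪t x, x⟫_ℂ := kitt_inner_nonneg ht0 x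
  calc ‖(⟪a x, x⟫_ℂ)‖ = ‖(⟪q x, q ((star u) x)⟫_ℂ)‖ := by rw [hinner]
    _ ≤ ‖q x‖ * ‖q ((star u) x)‖ := norm_inner_le_norm _ _
    _ ≤ Real.sqrt (re ⟪s x, x⟫_ℂ + ε) * Real.sqrt (re ⟪t x, x⟫_ℂ) := by
        have e1 : ‖q x‖ = Real.sqrt (re ⟪s x, x⟫_ℂ + ε) := by
          rw [← hqx, Real.sqrt_sq (norm_nonneg _)]
        have e2 : ‖q ((star u) x)‖ ≤ Real.sqrt (re ⟪t x, x⟫_ℂ) := by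
          rw [show ‖q ((star u) x)‖ = Real.sqrt (‖q ((star u) x)‖ ^ 2) from
            (Real.sqrt_sq (norm_nonneg _)).symm]
          exact Real.sqrt_le_sqrt hqux
        rw [e1]
        exact mul_le_mul_of_nonneg_left e2 (Real.sqrt_nonneg _)
    _ ≤ ((re ⟪s x, x⟫_ℂ + ε) + re ⟪t x, x⟫_ℂ) / 2 := kitt_sqrt_amgm (by linarith) htx0
    _ = (re ⟪(s + t) x, x⟫_ℂ + ε) / 2 := by
        rw [ContinuousLinearMap.add_apply, inner_add_left, map_add]
        ring


lemma kitt_ssq_norm_b (a : H →L[ℂ] H) :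
    ‖cfc (fun y : ℝ => Real.sqrt (Real.sqrt y)) (star a * a)‖ ≤ Real.sqrt ‖a‖ := by
  refine norm_cfc_le (Real.sqrt_nonneg _) fun y hy => ?_
  obtain ⟨hy0, hyM⟩ := kitt_spec_b a y hy
  rw [Real.norm_eq_abs, abs_of_nonneg (Real.sqrt_nonneg _)]
  calc Real.sqrt (Real.sqrt y) ≤ Real.sqrt (Real.sqrt (‖a‖ * ‖a‖)) := by
        exact Real.sqrt_le_sqrt (Real.sqrt_le_sqrt hyM)
    _ = Real.sqrt ‖a‖ := by rw [Real.sqrt_mul_self (norm_nonneg a)]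

lemma kitt_ssq_norm_c (a : H →L[ℂ] H) :
    ‖cfc (fun y : ℝ => Real.sqrt (Real.sqrt y)) (a * star a)‖ ≤ Real.sqrt ‖a‖ := by
  refine norm_cfc_le (Real.sqrt_nonneg _) fun y hy => ?_
  obtain ⟨hy0, hyM⟩ := kitt_spec_c a y hy
  rw [Real.norm_eq_abs, abs_of_nonneg (Real.sqrt_nonneg _)]
  calc Real.sqrt (Real.sqrt y) ≤ Real.sqrt (Real.sqrt (‖a‖ * ‖a‖)) := by
        exact Real.sqrt_le_sqrt (Real.sqrt_le_sqrt hyM)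
    _ = Real.sqrt ‖a‖ := by rw [Real.sqrt_mul_self (norm_nonneg a)]

lemma kitt_main_nontrivial (a : H →L[ℂ] H) :
    numRad a ≤ (1 / 2) * (‖a‖ + Real.sqrt ‖a * a‖) := by
  have hB0 : (0:ℝ) ≤ (1 / 2) * (‖a‖ + Real.sqrt ‖a * a‖) := by positivity
  refine le_of_forall_pos_le_add fun δ hδ => ?_
  set ε := min δ (δ ^ 2 / (2 * ‖a‖ + 1)) with hεdef
  have hε : 0 < ε := lt_min hδ (by positivity)
  have hεδ : ε ≤ δ := min_le_left _ _
  have step_eps : Real.sqrt (2 * ε * ‖a‖) ≤ δ := by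
    have h1 : 2 * ε * ‖a‖ ≤ δ ^ 2 := by
      have h2 : ε ≤ δ ^ 2 / (2 * ‖a‖ + 1) := min_le_right _ _
      have h3 : 0 < 2 * ‖a‖ + 1 := by positivity
      rw [le_div_iff₀ h3] at h2
      nlinarith [norm_nonneg a, hε.le]
    calc Real.sqrt (2 * ε * ‖a‖) ≤ Real.sqrt (δ ^ 2) := Real.sqrt_le_sqrt h1
      _ = δ := Real.sqrt_sq hδ.le
  refine Real.iSup_le (fun z => ?_) (by positivity)
  obtain ⟨x, hx⟩ := z
  set s := cfc (fun y : ℝ => Real.sqrt y) (star a * a) with hsdef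
  set t := cfc (fun y : ℝ => Real.sqrt y) (a * star a) with htdef
  set s2 := cfc (fun y : ℝ => Real.sqrt (Real.sqrt y)) (star a * a) with hs2def
  set t2 := cfc (fun y : ℝ => Real.sqrt (Real.sqrt y)) (a * star a) with ht2def
  have h1 := kitt_stepA a hε hx
  have h2 : re ⟪(s + t) x, x⟫_ℂ ≤ ‖s + t‖ := kitt_inner_le_norm hx
  have h3 : ‖s + t‖ ≤ ‖a‖ + ‖s2 * t2‖ := by
    refine kitt_norm_add_le_aux s t s2 t2 (cfc_predicate _ _) (cfc_predicate _ _)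
      (kitt_ssq_mul _) (kitt_ssq_mul _) ?_ ?_ le_rfl (norm_nonneg a) (norm_nonneg _)
    · calc ‖s2‖ * ‖s2‖ ≤ Real.sqrt ‖a‖ * Real.sqrt ‖a‖ := by
            have := kitt_ssq_norm_b a
            have h0 : (0:ℝ) ≤ ‖s2‖ := norm_nonneg _
            nlinarith [Real.sqrt_nonneg ‖a‖]
        _ = ‖a‖ := Real.mul_self_sqrt (norm_nonneg a)
    · calc ‖t2‖ * ‖t2‖ ≤ Real.sqrt ‖a‖ * Real.sqrt ‖a‖ := by
            have := kitt_ssq_norm_c a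
            have h0 : (0:ℝ) ≤ ‖t2‖ := norm_nonneg _
            nlinarith [Real.sqrt_nonneg ‖a‖]
        _ = ‖a‖ := Real.mul_self_sqrt (norm_nonneg a)
  have h4 : ‖s2 * t2‖ ≤ Real.sqrt (‖a * a‖ + 2 * ε * ‖a‖) := by
    have hk := kitt_kappa_sq a hε
    calc ‖s2 * t2‖ = Real.sqrt (‖s2 * t2‖ * ‖s2 * t2‖) :=
          (Real.sqrt_mul_self (norm_nonneg _)).symm
      _ ≤ Real.sqrt (‖a * a‖ + 2 * ε * ‖a‖) := Real.sqrt_le_sqrt hk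
  have h5 : Real.sqrt (‖a * a‖ + 2 * ε * ‖a‖)
      ≤ Real.sqrt ‖a * a‖ + Real.sqrt (2 * ε * ‖a‖) :=
    kitt_sqrt_add_le (norm_nonneg _) (by positivity)
  calc ‖(⟪a x, x⟫_ℂ)‖ ≤ (re ⟪(s + t) x, x⟫_ℂ + ε) / 2 := h1
    _ ≤ (‖a‖ + ‖s2 * t2‖ + ε) / 2 := by linarith
    _ ≤ (‖a‖ + (Real.sqrt ‖a * a‖ + Real.sqrt (2 * ε * ‖a‖)) + ε) / 2 := by
        have := h4.trans h5
        linarith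
    _ ≤ (‖a‖ + (Real.sqrt ‖a * a‖ + δ) + δ) / 2 := by linarith
    _ ≤ (1 / 2) * (‖a‖ + Real.sqrt ‖a * a‖) + δ := by linarith [hδ.le]


end KittanehNontrivial

theorem kittaneh_norm_ineq (A : H →L[ℂ] H) :
    numRad A ≤ (1 / 2) * (‖A‖ + Real.sqrt ‖A * A‖) := by
  rcases subsingleton_or_nontrivial H with hsub | hnt
  · have hempty : IsEmpty {x : H // ‖x‖ = 1} := ⟨fun z => by
      have h0 : (z : H) = 0 := Subsingleton.elim _ _
      have hz := z.2
      rw [h0, norm_zero] at hz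
      exact zero_ne_one hz⟩
    rw [numRad, Real.iSup_of_isEmpty _]
    positivity
  · exact kitt_main_nontrivial A
end

section
/- If A is a positive bounded linear operator on a complex Hilbert space and r ≥ 1, then for every unit vector x, ⟨Ax,x⟩^r ≤ ⟨A^r x,x⟩ (McCarthy's inequality). -/
theorem mccarthy_inequality {H : Type*} [NormedAddCommGroup H] [InnerProductSpace ℂ H]
    [CompleteSpace H] (A : H →L[ℂ] H) (hA : A.IsPositive) (r : ℝ) (hr : 1 ≤ r)
    (x : H) (hx : ‖x‖ = 1) :
    (inner ℂ (A x) x : ℂ).re ^ r ≤ (inner ℂ ((CFC.rpow A r) x) x : ℂ).re := by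
  have hA' : (0 : H →L[ℂ] H) ≤ A := (ContinuousLinearMap.nonneg_iff_isPositive A).mpr hA
  have hsa : IsSelfAdjoint A := hA.isSelfAdjoint
  set c : ℝ := (inner ℂ (A x) x : ℂ).re with hc
  have hc0 : 0 ≤ c := (Complex.nonneg_iff.mp (hA.inner_nonneg_left x)).1
  have hrpow : CFC.rpow A r = cfc (fun t : ℝ => t ^ r) A := by
    rw [CFC.rpow, cfc_nnreal_eq_real (a := A)]
    apply cfc_congr
    intro t ht
    have : 0 ≤ t := spectrum_nonneg_of_nonneg hA' ht
    simp [NNReal.coe_rpow, Real.coe_toNNReal t this]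
  have hBpos : (CFC.rpow A r).IsPositive :=
    (ContinuousLinearMap.nonneg_iff_isPositive _).mp CFC.rpow_nonneg
  rcases eq_or_lt_of_le hc0 with h0 | hcpos
  · rw [← h0, Real.zero_rpow (by linarith)]
    exact (Complex.nonneg_iff.mp (hBpos.inner_nonneg_left x)).1
  · set k : ℝ := c ^ r - r * c ^ (r - 1) * c with hk
    set m : ℝ := r * c ^ (r - 1) with hm
    have hcont : Continuous (fun t : ℝ => t ^ r) :=
      continuous_iff_continuousAt.mpr fun t =>
        Real.continuousAt_rpow_const t r (Or.inr (by linarith))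
    have hle : cfc (fun t : ℝ => k + m * t) A ≤ cfc (fun t : ℝ => t ^ r) A := by
      apply cfc_mono
      · intro t ht
        have ht0 : 0 ≤ t := spectrum_nonneg_of_nonneg hA' ht
        have hs : -1 ≤ t / c - 1 := by
          have : 0 ≤ t / c := div_nonneg ht0 hc0
          linarith
        have key := one_add_mul_self_le_rpow_one_add hs hr
        have h1 : (1 + (t / c - 1)) = t / c := by ring
        rw [h1] at key
        have key2 : c ^ r * (1 + r * (t / c - 1)) ≤ c ^ r * (t / c) ^ r :=
          mul_le_mul_of_nonneg_left key (Real.rpow_nonneg hc0 r)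
        have hcr : c ^ (r - 1) = c ^ r / c := by
          rw [Real.rpow_sub hcpos, Real.rpow_one]
        calc k + m * t = c ^ r * (1 + r * (t / c - 1)) := by
              rw [hk, hm, hcr]; field_simp; ring
          _ ≤ c ^ r * (t / c) ^ r := key2
          _ = t ^ r := by
              rw [Real.div_rpow ht0 (le_of_lt hcpos), mul_div_cancel₀]
              exact ne_of_gt (Real.rpow_pos_of_pos hcpos r)
      · exact (continuous_const.add (continuous_const.mul continuous_id)).continuousOn
      · exact hcont.continuousOn
    have hgA : cfc (fun t : ℝ => k + m * t) A = k • (1 : H →L[ℂ] H) + m • A := by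
      have h1 : (fun t : ℝ => k + m * t) = fun t => (fun _ => k) t + (fun t => m * t) t := rfl
      rw [h1, cfc_add A _ _, cfc_const_mul m _ A, cfc_const k A, cfc_id' ℝ A]
      simp [Algebra.algebraMap_eq_smul_one]
    rw [hgA, ← hrpow, ContinuousLinearMap.le_def] at hle
    have hpos := hle.inner_nonneg_left x
    have hcompute : (inner ℂ ((k • (1 : H →L[ℂ] H) + m • A) x) x : ℂ).re = k + m * c := by
      simp only [ContinuousLinearMap.add_apply, ContinuousLinearMap.smul_apply,
        ContinuousLinearMap.one_apply, inner_add_left]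
      have hksmul : (k • x : H) = (k : ℂ) • x := by simp
      have hmsmul : (m • A x : H) = (m : ℂ) • A x := by simp
      rw [hksmul, hmsmul, inner_smul_left, inner_smul_left]
      simp [inner_self_eq_norm_sq_to_K, hx, hc]
    have hkm : k + m * c = c ^ r := by
      rw [hk, hm]
      have hcr : c ^ (r - 1) * c = c ^ r := by
        rw [← Real.rpow_add_one (ne_of_gt hcpos)]; ring_nf
      nlinarith [hcr]
    have hdiff : (inner ℂ ((CFC.rpow A r - (k • (1 : H →L[ℂ] H) + m • A)) x) x : ℂ).re =
        (inner ℂ ((CFC.rpow A r) x) x : ℂ).re - (k + m * c) := by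
      rw [← hcompute]
      simp [ContinuousLinearMap.sub_apply, inner_sub_left]
    have hpos' : 0 ≤ (inner ℂ ((CFC.rpow A r - (k • (1 : H →L[ℂ] H) + m • A)) x) x : ℂ).re := (Complex.nonneg_iff.mp hpos).1
    rw [hdiff, hkm] at hpos'
    linarith
end

section
/- For vectors x, y, e in a complex Hilbert space with ‖e‖ = 1, |⟨x,e⟩⟨e,y⟩| ≤ (1/2)(‖x‖‖y‖ + |⟨x,y⟩|) (Buzano's inequality). -/
theorem buzano_inequality {H : Type*} [NormedAddCommGroup H] [InnerProductSpace ℂ H]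
    (x y e : H) (he : ‖e‖ = 1) :
    ‖(inner ℂ x e : ℂ) * (inner ℂ e y : ℂ)‖ ≤ (1 / 2) * (‖x‖ * ‖y‖ + ‖(inner ℂ x y : ℂ)‖) := by
  set z : H := (2 : ℂ) • (inner ℂ e y : ℂ) • e - y with hz
  have hnormz : ‖z‖ = ‖y‖ := by
    have h2 : ‖z‖ ^ 2 = ‖y‖ ^ 2 := by
      have := norm_sub_sq (𝕜 := ℂ) ((2 : ℂ) • (inner ℂ e y : ℂ) • e) y
      rw [hz, this]
      have hinner : (inner ℂ ((2 : ℂ) • (inner ℂ e y : ℂ) • e) y : ℂ)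
          = 2 * ((‖(inner ℂ e y : ℂ)‖ : ℂ) ^ 2) := by
        rw [inner_smul_left, inner_smul_left, RCLike.conj_mul]
        norm_num [Complex.conj_ofNat]
      have hnorm : ‖(2 : ℂ) • (inner ℂ e y : ℂ) • e‖ ^ 2 = 4 * ‖(inner ℂ e y : ℂ)‖ ^ 2 := by
        simp [norm_smul, he]; ring
      rw [hnorm, hinner]
      have : RCLike.re ((2:ℂ) * ((‖(inner ℂ e y : ℂ)‖ : ℂ) ^ 2))
          = 2 * ‖(inner ℂ e y : ℂ)‖ ^ 2 := by
        norm_num [← Complex.ofReal_pow]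
      rw [this]; ring
    have h1 : (0:ℝ) ≤ ‖z‖ := norm_nonneg _
    have h2' : (0:ℝ) ≤ ‖y‖ := norm_nonneg _
    nlinarith
  have key : (2 : ℂ) * ((inner ℂ x e : ℂ) * (inner ℂ e y : ℂ)) = inner ℂ x y + inner ℂ x z := by
    rw [hz, inner_sub_right, inner_smul_right, inner_smul_right]
    ring
  have hb : ‖(inner ℂ x z : ℂ)‖ ≤ ‖x‖ * ‖y‖ := by
    calc ‖(inner ℂ x z : ℂ)‖ ≤ ‖x‖ * ‖z‖ := norm_inner_le_norm x z
    _ = ‖x‖ * ‖y‖ := by rw [hnormz]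
  have h2 : (2:ℝ) * ‖(inner ℂ x e : ℂ) * (inner ℂ e y : ℂ)‖
      = ‖(inner ℂ x y : ℂ) + inner ℂ x z‖ := by
    rw [← key]
    simp [norm_mul]
  have h3 : ‖(inner ℂ x y : ℂ) + inner ℂ x z‖ ≤ ‖(inner ℂ x y : ℂ)‖ + ‖x‖ * ‖y‖ :=
    le_trans (norm_add_le _ _) (by linarith)
  linarith [h2 ▸ h3]
end

section
/- For A, B ∈ B(H), the numerical radius of the off-diagonal block operator T = [[O, A],[B, O]] on H ⊕ H satisfies w(T) ≥ (1/2)‖Re(A) + i·Im(B)‖ + (1/4)| ‖A+B*‖ − ‖A−B*‖ |. -/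
variable {H : Type*} [NormedAddCommGroup H] [InnerProductSpace ℂ H] [CompleteSpace H]

open ContinuousLinearMap Complex

lemma numRad_nonneg' {E : Type*} [NormedAddCommGroup E] [InnerProductSpace ℂ E]
    (T : E →L[ℂ] E) : 0 ≤ numRad T :=
  Real.iSup_nonneg fun _ => norm_nonneg _

lemma norm_inner_le_numRad' {E : Type*} [NormedAddCommGroup E] [InnerProductSpace ℂ E]
    (T : E →L[ℂ] E) (z : E) (hz : ‖z‖ = 1) : ‖(inner ℂ (T z) z : ℂ)‖ ≤ numRad T := by
  have hb : BddAbove (Set.range fun x : {x : E // ‖x‖ = 1} => ‖(inner ℂ (T x) (x : E) : ℂ)‖) := by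
    refine ⟨‖T‖, ?_⟩
    rintro _ ⟨⟨x, hx⟩, rfl⟩
    calc ‖(inner ℂ (T x) (x : E) : ℂ)‖ ≤ ‖T x‖ * ‖x‖ := norm_inner_le_norm _ _
      _ ≤ (‖T‖ * ‖x‖) * ‖x‖ := by gcongr; exact T.le_opNorm x
      _ = ‖T‖ := by rw [hx]; ring
  exact le_ciSup hb ⟨z, hz⟩

omit [CompleteSpace H] in
lemma blockOffDiag_apply' (A B : H →L[ℂ] H) (z : WithLp 2 (H × H)) :
    blockOffDiag A B z = (WithLp.equiv 2 (H × H)).symm (A z.snd, B z.fst) := by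
  simp [blockOffDiag]; rfl

omit [CompleteSpace H] in
lemma half_key (A B : H →L[ℂ] H) (u v : H) (hu : ‖u‖ = 1) (hv : ‖v‖ = 1) :
    ‖(inner ℂ (A v) u + inner ℂ (B u) v : ℂ)‖ ≤ 2 * numRad (blockOffDiag A B) := by
  set z0 : WithLp 2 (H × H) := (WithLp.equiv 2 (H × H)).symm (u, v) with hz0
  have hfst : z0.fst = u := rfl
  have hsnd : z0.snd = v := rfl
  set c : ℂ := (((Real.sqrt 2)⁻¹ : ℝ) : ℂ) with hc
  have hs2 : (0:ℝ) < Real.sqrt 2 := by positivity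
  have hcn : ‖c‖ = (Real.sqrt 2)⁻¹ := by
    rw [hc, Complex.norm_real, Real.norm_eq_abs, _root_.abs_of_pos (by positivity)]
  set z : WithLp 2 (H × H) := c • z0 with hz
  have hz0norm : ‖z0‖ = Real.sqrt 2 := by
    rw [WithLp.prod_norm_eq_of_L2, hfst, hsnd, hu, hv]
    norm_num
  have hz1 : ‖z‖ = 1 := by
    rw [hz, norm_smul, hcn, hz0norm, inv_mul_cancel₀ (ne_of_gt hs2)]
  have hTz0 : blockOffDiag A B z0 = (WithLp.equiv 2 (H × H)).symm (A v, B u) := by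
    rw [blockOffDiag_apply', hfst, hsnd]
  have h2 : (inner ℂ ((blockOffDiag A B) z) z : ℂ)
      = (starRingEnd ℂ) c * c * (inner ℂ (A v) u + inner ℂ (B u) v) := by
    rw [hz, map_smul, inner_smul_left, inner_smul_right, hTz0, hz0,
      WithLp.prod_inner_apply]
    simp only [WithLp.equiv_symm_apply, WithLp.toLp_fst, WithLp.toLp_snd]
    ring
  have h3 := norm_inner_le_numRad' (blockOffDiag A B) z hz1
  rw [h2, norm_mul, norm_mul, RCLike.norm_conj, hcn] at h3
  have h4 : (Real.sqrt 2)⁻¹ * (Real.sqrt 2)⁻¹ = 1 / 2 := by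
    rw [← mul_inv, Real.mul_self_sqrt (by norm_num)]; norm_num
  nlinarith [norm_nonneg (inner ℂ (A v) u + inner ℂ (B u) v : ℂ)]

lemma re_eq (A B : H →L[ℂ] H) (u v : H) :
    ((inner ℂ ((A + adjoint B) v) u : ℂ)).re
      = ((inner ℂ (A v) u + inner ℂ (B u) v : ℂ)).re := by
  have hconj : (inner ℂ ((adjoint B) v) u : ℂ) = (starRingEnd ℂ) (inner ℂ (B u) v) := by
    rw [adjoint_inner_left, inner_conj_symm]
  rw [add_apply, inner_add_left, hconj]
  simp only [Complex.add_re, Complex.conj_re]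

lemma im_eq (A B : H →L[ℂ] H) (u v : H) :
    ((inner ℂ ((A - adjoint B) v) u : ℂ)).im
      = ((inner ℂ (A v) u + inner ℂ (B u) v : ℂ)).im := by
  have hconj : (inner ℂ ((adjoint B) v) u : ℂ) = (starRingEnd ℂ) (inner ℂ (B u) v) := by
    rw [adjoint_inner_left, inner_conj_symm]
  rw [sub_apply, inner_sub_left, hconj]
  simp only [Complex.sub_im, Complex.add_im, Complex.conj_im]
  ring

lemma normC_le (A B : H →L[ℂ] H) :
    ‖A + adjoint B‖ ≤ 2 * numRad (blockOffDiag A B) := by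
  have hW := numRad_nonneg' (blockOffDiag A B)
  refine opNorm_le_bound _ (by linarith) fun v0 => ?_
  by_cases hv0 : v0 = 0
  · simp [hv0]
  have hv0' : ‖v0‖ ≠ 0 := norm_ne_zero_iff.mpr hv0
  set v : H := ((‖v0‖ : ℂ))⁻¹ • v0 with hvdef
  have hv : ‖v‖ = 1 := by
    rw [hvdef, norm_smul]; simp [inv_mul_cancel₀ hv0']
  set C := A + adjoint B with hC
  have key : ‖C v‖ ≤ 2 * numRad (blockOffDiag A B) := by
    by_cases h0 : C v = 0
    · rw [h0, norm_zero]; linarith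
    have hCv : ‖C v‖ ≠ 0 := norm_ne_zero_iff.mpr h0
    set u : H := ((‖C v‖ : ℂ))⁻¹ • C v with hudef
    have hu : ‖u‖ = 1 := by
      rw [hudef, norm_smul]; simp [inv_mul_cancel₀ hCv]
    have hre : ((inner ℂ (C v) u : ℂ)).re = ‖C v‖ := by
      rw [hudef, inner_smul_right, inner_self_eq_norm_sq_to_K, Complex.mul_re]
      simp [pow_two, hCv]
    calc ‖C v‖ = ((inner ℂ (C v) u : ℂ)).re := hre.symm
      _ = ((inner ℂ (A v) u + inner ℂ (B u) v : ℂ)).re := re_eq A B u v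
      _ ≤ ‖(inner ℂ (A v) u + inner ℂ (B u) v : ℂ)‖ := Complex.re_le_norm _
      _ ≤ 2 * numRad (blockOffDiag A B) := half_key A B u v hu hv
  have hCv0 : C v0 = ((‖v0‖ : ℂ)) • C v := by
    rw [hvdef, map_smul, smul_smul, mul_inv_cancel₀ (by exact_mod_cast hv0'), one_smul]
  calc ‖C v0‖ = ‖v0‖ * ‖C v‖ := by
        rw [hCv0, norm_smul]; simp
      _ ≤ ‖v0‖ * (2 * numRad (blockOffDiag A B)) :=
        mul_le_mul_of_nonneg_left key (norm_nonneg _)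
      _ = 2 * numRad (blockOffDiag A B) * ‖v0‖ := by ring

lemma normD_le (A B : H →L[ℂ] H) :
    ‖A - adjoint B‖ ≤ 2 * numRad (blockOffDiag A B) := by
  have hW := numRad_nonneg' (blockOffDiag A B)
  refine opNorm_le_bound _ (by linarith) fun v0 => ?_
  by_cases hv0 : v0 = 0
  · simp [hv0]
  have hv0' : ‖v0‖ ≠ 0 := norm_ne_zero_iff.mpr hv0
  set v : H := ((‖v0‖ : ℂ))⁻¹ • v0 with hvdef
  have hv : ‖v‖ = 1 := by
    rw [hvdef, norm_smul]; simp [inv_mul_cancel₀ hv0']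
  set D := A - adjoint B with hD
  have key : ‖D v‖ ≤ 2 * numRad (blockOffDiag A B) := by
    by_cases h0 : D v = 0
    · rw [h0, norm_zero]; linarith
    have hDv : ‖D v‖ ≠ 0 := norm_ne_zero_iff.mpr h0
    set u : H := (Complex.I * ((‖D v‖ : ℂ))⁻¹) • D v with hudef
    have hu : ‖u‖ = 1 := by
      rw [hudef, norm_smul]; simp [inv_mul_cancel₀ hDv]
    have him : ((inner ℂ (D v) u : ℂ)).im = ‖D v‖ := by
      rw [hudef, inner_smul_right, inner_self_eq_norm_sq_to_K]
      simp [Complex.mul_im, Complex.mul_re, pow_two, hDv]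
    calc ‖D v‖ = ((inner ℂ (D v) u : ℂ)).im := him.symm
      _ = ((inner ℂ (A v) u + inner ℂ (B u) v : ℂ)).im := im_eq A B u v
      _ ≤ ‖(inner ℂ (A v) u + inner ℂ (B u) v : ℂ)‖ := by
          calc _ ≤ |((inner ℂ (A v) u + inner ℂ (B u) v : ℂ)).im| := le_abs_self _
            _ ≤ _ := Complex.abs_im_le_norm _
      _ ≤ 2 * numRad (blockOffDiag A B) := half_key A B u v hu hv
  have hDv0 : D v0 = ((‖v0‖ : ℂ)) • D v := by
    rw [hvdef, map_smul, smul_smul, mul_inv_cancel₀ (by exact_mod_cast hv0'), one_smul]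
  calc ‖D v0‖ = ‖v0‖ * ‖D v‖ := by
        rw [hDv0, norm_smul]; simp
      _ ≤ ‖v0‖ * (2 * numRad (blockOffDiag A B)) :=
        mul_le_mul_of_nonneg_left key (norm_nonneg _)
      _ = 2 * numRad (blockOffDiag A B) * ‖v0‖ := by ring

theorem numRad_blockOffDiag_lower_bound (A B : H →L[ℂ] H) :
    numRad (blockOffDiag A B)
      ≥ (1 / 2) * ‖reOp A + Complex.I • imOp B‖
        + (1 / 4) * |‖A + ContinuousLinearMap.adjoint B‖
            - ‖A - ContinuousLinearMap.adjoint B‖| := by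
  have h1 := normC_le A B
  have h2 := normD_le A B
  have hid : reOp A + Complex.I • imOp B
      = (2⁻¹ : ℂ) • ((A - adjoint B) + adjoint (A + adjoint B)) := by
    rw [reOp, imOp, map_add, adjoint_adjoint, smul_smul]
    have hI : Complex.I * (1 / (2 * Complex.I)) = 2⁻¹ := by
      field_simp
    rw [hI]
    module
  have h3 : ‖reOp A + Complex.I • imOp B‖
      ≤ 2⁻¹ * (‖A - adjoint B‖ + ‖A + adjoint B‖) := by
    rw [hid, norm_smul]
    have hn : ‖(2⁻¹ : ℂ)‖ = 2⁻¹ := by norm_num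
    rw [hn]
    have : ‖(A - adjoint B) + adjoint (A + adjoint B)‖
        ≤ ‖A - adjoint B‖ + ‖A + adjoint B‖ := by
      calc ‖(A - adjoint B) + adjoint (A + adjoint B)‖
          ≤ ‖A - adjoint B‖ + ‖adjoint (A + adjoint B)‖ := norm_add_le _ _
        _ = ‖A - adjoint B‖ + ‖A + adjoint B‖ := by rw [adjoint.norm_map]
    have h2' : (0:ℝ) ≤ 2⁻¹ := by norm_num
    exact mul_le_mul_of_nonneg_left this h2'
  rw [ge_iff_le]
  rcases abs_cases (‖A + adjoint B‖ - ‖A - adjoint B‖) with ⟨he, _⟩ | ⟨he, _⟩ <;>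
    rw [he] <;> linarith
end
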